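/- Let f and g be nonconstant meromorphic functions on ℂ, let k and n be positive integers with n>2k, and let α be a nonzero meromorphic function such that (fⁿ)^{(k)}·(gⁿ)^{(k)} ≡ α² on ℂ. Suppose z₀∈ℂ is a zero of f of multiplicity p₀ and a pole of g of multiplicity s₀. Then np₀−k ≠ ns₀+k, and: (i) if np₀−k > ns₀+k, then z₀ is a zero of α of multiplicity (n(p₀−s₀)−2k)/2; (ii) if np₀−k < ns₀+k, then p₀ ≤ s₀ and z₀ is a pole of α of multiplicity (n(s₀−p₀)+2k)/2. -/

import Mathlib

open Complex MeasureTheory Filter Topology Polynomial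
open scoped ENNReal Classical

noncomputable section

namespace Nevanlinna

/-- The positive part of the logarithm, `log⁺`. -/
def logp (x : ℝ) : ℝ := max 0 (Real.log x)

/-- `f` is meromorphic on all of `ℂ`. -/
def Mero (f : ℂ → ℂ) : Prop := ∀ z : ℂ, MeromorphicAt f z

/-- `f` is nonconstant. -/
def Nonconst (f : ℂ → ℂ) : Prop := ¬ ∃ c : ℂ, ∀ z, f z = c

/-- The divisor of a meromorphic function: the order of the zero (positive) or pole
(negative) at `z`; junk value `0` at points where `f` is not meromorphic or vanishes
identically near `z`. -/
def div (f : ℂ → ℂ) (z : ℂ) : ℤ :=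
  if h : MeromorphicAt f z then ((meromorphicOrderAt f z).untopD 0) else 0

/-- Multiplicity of `z` as an `a`-point of `f`. -/
def zmult (f : ℂ → ℂ) (a : ℂ) (z : ℂ) : ℕ := (div (fun w => f w - a) z).toNat

/-- Multiplicity of `z` as a pole of `f`. -/
def pmult (f : ℂ → ℂ) (z : ℂ) : ℕ := (-(div f z)).toNat

/-- `z` is a pole of `f`. -/
def IsPole (f : ℂ → ℂ) (z : ℂ) : Prop := div f z < 0

/-- Unintegrated counting function attached to a multiplicity function `m`. -/
def ncnt (m : ℂ → ℕ) (t : ℝ) : ℝ := ∑ᶠ z ∈ {z : ℂ | ‖z‖ ≤ t}, (m z : ℝ)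

/-- Integrated (Nevanlinna) counting function attached to a multiplicity function `m`. -/
def Ncnt (m : ℂ → ℕ) (r : ℝ) : ℝ :=
  (∫ t in (0:ℝ)..r, (ncnt m t - ncnt m 0) / t) + ncnt m 0 * Real.log r

/-- `N(r, a; f)`, counted with multiplicity. -/
def Nzero (f : ℂ → ℂ) (a : ℂ) (r : ℝ) : ℝ := Ncnt (zmult f a) r

/-- `N(r, f) = N(r, ∞; f)`, counted with multiplicity. -/
def Npole (f : ℂ → ℂ) (r : ℝ) : ℝ := Ncnt (pmult f) r

/-- `N̄(r, a; f)`, multiplicities ignored. -/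
def Nzerobar (f : ℂ → ℂ) (a : ℂ) (r : ℝ) : ℝ := Ncnt (fun z => min 1 (zmult f a z)) r

/-- `N̄(r, f)`, multiplicities ignored. -/
def Npolebar (f : ℂ → ℂ) (r : ℝ) : ℝ := Ncnt (fun z => min 1 (pmult f z)) r

/-- The Nevanlinna proximity function `m(r, f)`. -/
def prox (f : ℂ → ℂ) (r : ℝ) : ℝ :=
  (2 * Real.pi)⁻¹ *
    ∫ θ in (0:ℝ)..(2 * Real.pi), logp ‖f (r * Complex.exp (θ * Complex.I))‖

/-- The Nevanlinna characteristic `T(r, f)`. -/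
def T (f : ℂ → ℂ) (r : ℝ) : ℝ := prox f r + Npole f r

/-- The growth exponent `limsup log⁺ N(r) / log r` of a real function. -/
def growthExp (N : ℝ → ℝ) : ℝ≥0∞ :=
  Filter.limsup (fun r => ENNReal.ofReal (logp (N r) / Real.log r)) Filter.atTop

/-- The order `ρ(f)`. -/
def rho (f : ℂ → ℂ) : ℝ≥0∞ := growthExp (T f)

/-- The hyper-order `ρ₂(f)`. -/
def rho2 (f : ℂ → ℂ) : ℝ≥0∞ := growthExp (fun r => logp (T f r))

/-- The lower order `μ(f)`. -/
def mu (f : ℂ → ℂ) : ℝ≥0∞ :=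
  Filter.liminf (fun r => ENNReal.ofReal (logp (T f r) / Real.log r)) Filter.atTop

/-- `ρ₁(0; f)`, the exponent of convergence of the zeros of `f`. -/
def rho1Zero (f : ℂ → ℂ) : ℝ≥0∞ := growthExp (Nzero f 0)

/-- `ρ₁(∞; f)`, the exponent of convergence of the poles of `f`. -/
def rho1Pole (f : ℂ → ℂ) : ℝ≥0∞ := growthExp (Npole f)

/-- `ρ̄₁(0; f)`. -/
def rho1barZero (f : ℂ → ℂ) : ℝ≥0∞ := growthExp (Nzerobar f 0)

/-- `ρ̄₁(∞; f)`. -/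
def rho1barPole (f : ℂ → ℂ) : ℝ≥0∞ := growthExp (Npolebar f)

/-- `N = S(r, f)`: `N(r) = o(T(r, f))` as `r → ∞` outside a set of finite linear measure. -/
def SmallQty (N : ℝ → ℝ) (f : ℂ → ℂ) : Prop :=
  ∃ E : Set ℝ, volume E ≠ ⊤ ∧
    ∀ ε : ℝ, 0 < ε → ∀ᶠ r in atTop, r ∉ E → N r ≤ ε * T f r

/-- `a` is a small function of `f`: `T(r, a) = S(r, f)`. -/
def SmallFn (a f : ℂ → ℂ) : Prop := SmallQty (T a) f

/-- `0` is a Borel exceptional value of `f`. -/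
def BorelZero (f : ℂ → ℂ) : Prop :=
  (0 < rho f ∧ rho1Zero f < rho f) ∨
  (rho f = 0 ∧ (fun r => Nzero f 0 r) =O[atTop] Real.log)

/-- `∞` is a Borel exceptional value of `f`. -/
def BorelPole (f : ℂ → ℂ) : Prop :=
  (0 < rho f ∧ rho1Pole f < rho f) ∨
  (rho f = 0 ∧ (fun r => Npole f r) =O[atTop] Real.log)

/-- A nonzero meromorphic function on `ℂ`. -/
def NonzeroMero (f : ℂ → ℂ) : Prop := Mero f ∧ ∃ z, AnalyticAt ℂ f z ∧ f z ≠ 0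

/-- `f` and `g` have common poles. -/
def CommonPoles (f g : ℂ → ℂ) : Prop := ∀ z, IsPole f z ↔ IsPole g z

/-- `f = 0 ↦ α = 0`: every zero of `f` of multiplicity `p` is a zero of `α` of
multiplicity at least `p`. -/
def ZeroMapsTo (f α : ℂ → ℂ) : Prop := ∀ z, 0 < div f z → div f z ≤ div α z

/-- `f = ∞ ↦ α = ∞`: every pole of `f` of multiplicity `p` is a pole of `α` of
multiplicity at least `p`. -/
def PoleMapsTo (f α : ℂ → ℂ) : Prop := ∀ z, div f z < 0 → div α z ≤ div f z

/-- The differential equation `(fⁿ)⁽ᵏ⁾ (gⁿ)⁽ᵏ⁾ ≡ α²`, as an identity at all points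
where `f` and `g` are analytic. -/
def MainEq (f g α : ℂ → ℂ) (n k : ℕ) : Prop :=
  ∀ z, AnalyticAt ℂ f z → AnalyticAt ℂ g z →
    iteratedDeriv k (fun w => f w ^ n) z * iteratedDeriv k (fun w => g w ^ n) z = α z ^ 2

/-- `f` is a polynomial function. -/
def IsPoly (f : ℂ → ℂ) : Prop := ∃ p : Polynomial ℂ, ∀ z, f z = p.eval z

/-- `f` is a transcendental entire function. -/
def TransEntire (f : ℂ → ℂ) : Prop := Differentiable ℂ f ∧ ¬ IsPoly f

/-- `R` is a (nonzero) rational function of degree `d = deg P − deg Q` for a coprime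
representation `R = P/Q`. -/
def RatWithDeg (R : ℂ → ℂ) (d : ℤ) : Prop :=
  ∃ p q : Polynomial ℂ, p ≠ 0 ∧ q ≠ 0 ∧ IsCoprime p q ∧
    (∀ z, q.eval z ≠ 0 → R z = p.eval z / q.eval z) ∧
    d = (p.natDegree : ℤ) - (q.natDegree : ℤ)

/-- `R` is a nonzero rational function. -/
def IsRat (R : ℂ → ℂ) : Prop := ∃ d : ℤ, RatWithDeg R d

/-- `R` is a rational function (possibly zero). -/
def IsRatFn (R : ℂ → ℂ) : Prop :=
  ∃ p q : Polynomial ℂ, q ≠ 0 ∧ ∀ z, q.eval z ≠ 0 → R z = p.eval z / q.eval z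

end Nevanlinna

namespace Nevanlinna


lemma analyticAt_deriv' {f : ℂ → ℂ} {x : ℂ} (h : AnalyticAt ℂ f x) : AnalyticAt ℂ (deriv f) x := by
  obtain ⟨s, hs, h2⟩ := h.exists_mem_nhds_analyticOnNhd
  exact h2.deriv x (mem_of_mem_nhds hs)

lemma order_mul' {f g : ℂ → ℂ} {x : ℂ} {a b : ℤ} (hf : MeromorphicAt f x) (hg : MeromorphicAt g x)
    (hfg : MeromorphicAt (fun z => f z * g z) x)
    (ha : meromorphicOrderAt f x = a) (hb : meromorphicOrderAt g x = b) : meromorphicOrderAt (fun z => f z * g z) x = ((a + b : ℤ) : WithTop ℤ) := by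
  rw [meromorphicOrderAt_eq_int_iff hf] at ha
  rw [meromorphicOrderAt_eq_int_iff hg] at hb
  obtain ⟨u, hu, hu0, hue⟩ := ha
  obtain ⟨v, hv, hv0, hve⟩ := hb
  rw [meromorphicOrderAt_eq_int_iff hfg]
  refine ⟨fun z => u z * v z, hu.mul hv, mul_ne_zero hu0 hv0, ?_⟩
  filter_upwards [hue, hve, self_mem_nhdsWithin] with z h1 h2 h3
  have hz : z - x ≠ 0 := sub_ne_zero.mpr h3
  simp only [smul_eq_mul] at *
  rw [h1, h2, zpow_add₀ hz]
  ring

/-- Order of the derivative of a meromorphic function with nonzero finite order. -/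
lemma order_deriv' {h : ℂ → ℂ} {x : ℂ} {m : ℤ} (hm : m ≠ 0)
    (hh : MeromorphicAt h x) (ho : meromorphicOrderAt h x = m) :
    ∃ H : MeromorphicAt (deriv h) x, meromorphicOrderAt (deriv h) x = ((m - 1 : ℤ) : WithTop ℤ) := by
  rw [meromorphicOrderAt_eq_int_iff hh] at ho
  obtain ⟨u, hu, hu0, hue⟩ := ho
  simp only [smul_eq_mul] at hue
  set v : ℂ → ℂ := fun z => (m : ℂ) * u z + (z - x) * deriv u z with hv_def
  have hv : AnalyticAt ℂ v x :=
    (analyticAt_const.mul hu).add ((analyticAt_id.sub analyticAt_const).mul (analyticAt_deriv' hu))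
  have hv0 : v x ≠ 0 := by
    simp only [hv_def, sub_self, zero_mul, add_zero]
    exact mul_ne_zero (by exact_mod_cast hm) hu0
  have key : ∀ᶠ z in 𝓝[≠] x, deriv h z = (z - x) ^ (m - 1) * v z := by
    rw [eventually_nhdsWithin_iff] at hue ⊢
    have hue2 := hue.eventually_nhds
    filter_upwards [hue2, hu.eventually_analyticAt.eventually_nhds] with z hz hu_z hzx
    have hzx' : z - x ≠ 0 := sub_ne_zero.mpr (by simpa using hzx)
    have hloc : h =ᶠ[𝓝 z] fun w => (w - x) ^ m * u w := by
      filter_upwards [hz, eventually_ne_nhds (show z ≠ x by simpa using hzx)] with w hw hwx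
      exact hw (by simpa using hwx)
    rw [hloc.deriv_eq]
    have d1 : HasDerivAt (fun w : ℂ => (w - x) ^ m) ((m : ℂ) * (z - x) ^ (m - 1)) z := by
      have := (hasDerivAt_zpow m (z - x) (Or.inl hzx')).comp z ((hasDerivAt_id z).sub_const x)
      simpa [Function.comp_def] using this
    have d2 : HasDerivAt u (deriv u z) z := by
      have := hu_z.self_of_nhds
      exact this.differentiableAt.hasDerivAt
    have d3 : HasDerivAt (fun w => (w - x) ^ m * u w) _ z := d1.mul d2
    rw [d3.deriv]
    have hm1 : (z - x) ^ m = (z - x) ^ (m - 1) * (z - x) := by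
      rw [← zpow_add_one₀ hzx']
      norm_num
    simp only [hv_def, hm1]
    ring
  have hψ : MeromorphicAt (fun z => (z - x) ^ (m - 1) * v z) x :=
    (((MeromorphicAt.id x).sub (MeromorphicAt.const x x)).zpow (m - 1)).mul hv.meromorphicAt
  have hH : MeromorphicAt (deriv h) x := hψ.congr (EventuallyEq.symm (by exact key))
  refine ⟨hH, ?_⟩
  rw [meromorphicOrderAt_eq_int_iff hH]
  exact ⟨v, hv, hv0, by filter_upwards [key] with z hz; simpa using hz⟩

lemma order_iteratedDeriv' {h : ℂ → ℂ} {x : ℂ} {m : ℤ} (k : ℕ)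
    (hcond : (k : ℤ) < m ∨ m < 0) (hh : MeromorphicAt h x) (ho : meromorphicOrderAt h x = m) :
    ∃ H : MeromorphicAt (iteratedDeriv k h) x, meromorphicOrderAt (iteratedDeriv k h) x = ((m - k : ℤ) : WithTop ℤ) := by
  induction k with
  | zero =>
    simp only [iteratedDeriv_zero]
    exact ⟨hh, by rw [show m - ((0:ℕ):ℤ) = m by simp]; exact ho⟩
  | succ j ih =>
    have hcond' : (j : ℤ) < m ∨ m < 0 := by
      rcases hcond with h1 | h1
      · left; push_cast at h1 ⊢; omega
      · right; exact h1
    obtain ⟨H, hHo⟩ := ih hcond'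
    have hmj : m - (j : ℤ) ≠ 0 := by
      rcases hcond with h1 | h1
      · push_cast at h1; omega
      · omega
    obtain ⟨H2, hH2⟩ := order_deriv' hmj H hHo
    rw [iteratedDeriv_succ]
    refine ⟨H2, ?_⟩
    rw [hH2]
    congr 1
    push_cast
    ring

lemma order_congr' {f g : ℂ → ℂ} {x : ℂ} (hf : MeromorphicAt f x) (hg : MeromorphicAt g x)
    (h : f =ᶠ[𝓝[≠] x] g) : meromorphicOrderAt f x = meromorphicOrderAt g x := by
  rcases eq_or_ne (meromorphicOrderAt f x) ⊤ with ht | ht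
  · rw [ht]; symm; rw [meromorphicOrderAt_eq_top_iff]
    filter_upwards [meromorphicOrderAt_eq_top_iff.mp ht, h] with z h1 h2
    rw [← h2]; exact h1
  · obtain ⟨a, ha⟩ := WithTop.ne_top_iff_exists.mp ht
    rw [← ha]; symm; rw [meromorphicOrderAt_eq_int_iff hg]
    obtain ⟨u, h1, h2, h3⟩ := (meromorphicOrderAt_eq_int_iff (n := a) hf).mp ha.symm
    exact ⟨u, h1, h2, by filter_upwards [h3, h] with z e1 e2; rw [← e2]; exact e1⟩


lemma order_pow' {f : ℂ → ℂ} {x : ℂ} {a : ℤ} (hf : MeromorphicAt f x) (ha : meromorphicOrderAt f x = a)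
    (n : ℕ) : ∃ H : MeromorphicAt (fun z => f z ^ n) x, meromorphicOrderAt (fun z => f z ^ n) x = ((n * a : ℤ) : WithTop ℤ) := by
  induction n with
  | zero =>
    have h1 : AnalyticAt ℂ (fun _ : ℂ => (1:ℂ)) x := analyticAt_const
    have hM : MeromorphicAt (fun z : ℂ => f z ^ 0) x :=
      h1.meromorphicAt.congr (by filter_upwards with z; simp)
    refine ⟨hM, ?_⟩
    rw [show ((0 : ℕ) * a : ℤ) = 0 by ring, meromorphicOrderAt_eq_int_iff hM]
    exact ⟨fun _ => 1, analyticAt_const, one_ne_zero, by filter_upwards with z; simp⟩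
  | succ j ih =>
    obtain ⟨H, hHo⟩ := ih
    have hmul : MeromorphicAt (fun z => f z ^ j * f z) x := H.mul hf
    have hord := order_mul' H hf hmul hHo ha
    have hM : MeromorphicAt (fun z => f z ^ (j + 1)) x := by
      refine hmul.congr ?_
      filter_upwards with z
      rw [pow_succ]
    refine ⟨hM, ?_⟩
    have hco : meromorphicOrderAt (fun z => f z ^ (j + 1)) x = meromorphicOrderAt (fun z => f z ^ j * f z) x :=
      order_congr' hM hmul (by filter_upwards with z; rw [pow_succ])
    rw [hco, hord]
    congr 1
    push_cast
    ring


lemma order_eq_of_div_eq {f : ℂ → ℂ} {z : ℂ} (hf : MeromorphicAt f z) {m : ℤ} (hm : m ≠ 0)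
    (h : div f z = m) : meromorphicOrderAt f z = m := by
  rw [div, dif_pos hf] at h
  cases ho : meromorphicOrderAt f z with
  | top => rw [ho] at h; simp at h; omega
  | coe a => rw [ho] at h; simp at h; rw [h]

lemma div_eq_of_order {f : ℂ → ℂ} {z : ℂ} (hf : MeromorphicAt f z) {m : ℤ}
    (h : meromorphicOrderAt f z = m) : div f z = m := by
  rw [div, dif_pos hf, h]
  rfl



/-- Local analysis at a point which is a zero of `f` and a pole of `g`. -/
theorem stmt13 (f g α : ℂ → ℂ) (k n : ℕ) (z₀ : ℂ) (p₀ s₀ : ℕ)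
    (hk : 0 < k) (hn : 2 * k < n)
    (hf : Mero f) (hg : Mero g) (hfnc : Nonconst f) (hgnc : Nonconst g)
    (hα : NonzeroMero α)
    (heq : MainEq f g α n k)
    (hp₀ : 0 < p₀) (hs₀ : 0 < s₀)
    (hzf : div f z₀ = (p₀ : ℤ)) (hpg : div g z₀ = -(s₀ : ℤ)) :
    ((n : ℤ) * p₀ - k ≠ (n : ℤ) * s₀ + k) ∧
    ((n : ℤ) * p₀ - k > (n : ℤ) * s₀ + k →
      0 < div α z₀ ∧ 2 * div α z₀ = (n : ℤ) * ((p₀ : ℤ) - s₀) - 2 * k) ∧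
    ((n : ℤ) * p₀ - k < (n : ℤ) * s₀ + k →
      (p₀ : ℤ) ≤ s₀ ∧ div α z₀ < 0 ∧
        2 * (-div α z₀) = (n : ℤ) * ((s₀ : ℤ) - p₀) + 2 * k) := by
  have hkZ : (0:ℤ) < k := by exact_mod_cast hk
  have hnZ : 2 * (k:ℤ) < n := by exact_mod_cast hn
  have hpZ : (1:ℤ) ≤ (p₀:ℤ) := by exact_mod_cast hp₀
  have hsZ : (1:ℤ) ≤ (s₀:ℤ) := by exact_mod_cast hs₀
  have hfo : meromorphicOrderAt f z₀ = (((p₀:ℤ)) : WithTop ℤ) :=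
    order_eq_of_div_eq (hf z₀) (by positivity) hzf
  have hgo : meromorphicOrderAt g z₀ = ((-(s₀:ℤ)) : WithTop ℤ) :=
    order_eq_of_div_eq (hg z₀) (by simp; omega) hpg
  obtain ⟨HFn, hFn⟩ := order_pow' (hf z₀) hfo n
  obtain ⟨HGn, hGn⟩ := order_pow' (hg z₀) hgo n
  obtain ⟨HF, hFo⟩ := order_iteratedDeriv' k
    (Or.inl (by nlinarith : (k:ℤ) < (n:ℤ) * (p₀:ℤ))) HFn hFn
  obtain ⟨HG, hGo⟩ := order_iteratedDeriv' k
    (Or.inr (by nlinarith : (n:ℤ) * (-(s₀:ℤ)) < 0)) HGn hGn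
  have hFG : MeromorphicAt (fun z => iteratedDeriv k (fun w => f w ^ n) z *
      iteratedDeriv k (fun w => g w ^ n) z) z₀ := HF.mul HG
  have hFGo := order_mul' HF HG hFG hFo hGo
  have hα2 : MeromorphicAt (fun z => α z ^ 2) z₀ := by
    have h2 : MeromorphicAt (α * α) z₀ := (hα.1 z₀).mul (hα.1 z₀)
    exact h2.congr (by filter_upwards with z; simp [Pi.mul_apply, sq])
  have hev : (fun z => iteratedDeriv k (fun w => f w ^ n) z *
      iteratedDeriv k (fun w => g w ^ n) z) =ᶠ[𝓝[≠] z₀] (fun z => α z ^ 2) := by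
    filter_upwards [(hf z₀).eventually_analyticAt, (hg z₀).eventually_analyticAt] with z h1 h2
    exact heq z h1 h2
  have horderα2 : meromorphicOrderAt (fun z => α z ^ 2) z₀ =
      ((((n:ℤ) * (p₀:ℤ) - k + ((n:ℤ) * (-(s₀:ℤ)) - k)) : ℤ) : WithTop ℤ) := by
    rw [order_congr' hα2 hFG hev.symm, hFGo]
  have hne : meromorphicOrderAt α z₀ ≠ ⊤ := by
    intro htop
    have h0 : ∀ᶠ z in 𝓝[≠] z₀, α z = 0 := meromorphicOrderAt_eq_top_iff.mp htop
    have h2 : meromorphicOrderAt (fun z => α z ^ 2) z₀ = ⊤ := meromorphicOrderAt_eq_top_iff.mpr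
      (by filter_upwards [h0] with z hz; simp [hz])
    rw [horderα2] at h2
    exact WithTop.coe_ne_top h2
  obtain ⟨a, ha⟩ := WithTop.ne_top_iff_exists.mp hne
  have e1 := order_mul' (hα.1 z₀) (hα.1 z₀) ((hα.1 z₀).mul (hα.1 z₀)) ha.symm ha.symm
  have e2 := order_congr' (g := fun z => α z * α z) hα2 ((hα.1 z₀).mul (hα.1 z₀))
    (by filter_upwards with z; simp [Pi.mul_apply, sq])
  rw [e2, e1] at horderα2
  have key : a + a = (n:ℤ) * (p₀:ℤ) - k + ((n:ℤ) * (-(s₀:ℤ)) - k) := by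
    exact_mod_cast horderα2
  have hdiv : div α z₀ = a := div_eq_of_order (hα.1 z₀) ha.symm
  rw [hdiv]
  refine ⟨?_, ?_, ?_⟩
  · intro hEq
    rcases le_or_gt (p₀:ℤ) (s₀:ℤ) with hle | hlt
    · nlinarith [mul_le_mul_of_nonneg_left hle (by positivity : (0:ℤ) ≤ (n:ℤ))]
    · have h1 : (s₀:ℤ) + 1 ≤ (p₀:ℤ) := hlt
      nlinarith [mul_le_mul_of_nonneg_left h1 (by positivity : (0:ℤ) ≤ (n:ℤ))]
  · intro hgt
    constructor
    · linarith
    · linarith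
  · intro hlt
    refine ⟨?_, by linarith, by linarith⟩
    by_contra hcon
    push_neg at hcon
    have h1 : (s₀:ℤ) + 1 ≤ (p₀:ℤ) := hcon
    nlinarith [mul_le_mul_of_nonneg_left h1 (by positivity : (0:ℤ) ≤ (n:ℤ))]


end Nevanlinna
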